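/- If κ is a caliber of each space X_t (t ∈ T) and κ is an uncountable regular cardinal, then κ is a caliber of the product space ∏_{t∈T} X_t. -/

import Mathlib

universe u

open Cardinal Set

section Aux

variable {ι T : Type u} {κ : Cardinal.{u}} [DecidableEq T]

/-- If every point lies in fewer than `κ` of the finite sets `F i`, then there is a
`κ`-sized pairwise disjoint subfamily. -/
lemma exists_disjoint_family (hreg : κ.IsRegular) (F : ι → Finset T)
    (hι : κ ≤ #ι) (hfib : ∀ t : T, #{i | t ∈ F i} < κ) :
    ∃ S : Set ι, κ ≤ #S ∧ ∀ i ∈ S, ∀ j ∈ S, i ≠ j → F i ∩ F j = ∅ := by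
  have hzorn : ∀ c ⊆ {S : Set ι | ∀ i ∈ S, ∀ j ∈ S, i ≠ j → F i ∩ F j = ∅},
      IsChain (· ⊆ ·) c → ∃ ub ∈ {S : Set ι | ∀ i ∈ S, ∀ j ∈ S, i ≠ j → F i ∩ F j = ∅},
        ∀ s ∈ c, s ⊆ ub := by
    intro c hc hchain
    refine ⟨⋃₀ c, ?_, fun s hs => subset_sUnion_of_mem hs⟩
    rintro i ⟨s, hs, his⟩ j ⟨s', hs', hjs'⟩ hij
    rcases hchain.total hs hs' with hss | hss
    · exact hc hs' i (hss his) j hjs' hij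
    · exact hc hs i his j (hss hjs') hij
  obtain ⟨M, hMmem, hMmax⟩ := zorn_subset
      {S : Set ι | ∀ i ∈ S, ∀ j ∈ S, i ≠ j → F i ∩ F j = ∅} hzorn
  by_cases hM : κ ≤ #M
  · exact ⟨M, hM, hMmem⟩
  push_neg at hM
  exfalso
  -- every index lies in `M` or shares a point with some member of `M`
  have hcover : (univ : Set ι) ⊆ M ∪ ⋃ j ∈ M, ⋃ t ∈ (F j : Set T), {i | t ∈ F i} := by
    intro i _
    by_cases hiM : i ∈ M
    · exact Or.inl hiM
    right
    have hnot : insert i M ∉ {S : Set ι | ∀ i ∈ S, ∀ j ∈ S, i ≠ j → F i ∩ F j = ∅} := by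
      intro hmem
      exact hiM (hMmax hmem (subset_insert i M) (mem_insert i M))
    simp only [mem_setOf_eq] at hnot
    push_neg at hnot
    obtain ⟨a, ha, b, hb, hab, hFab⟩ := hnot
    obtain ⟨t, ht⟩ := id hFab
    rw [Finset.mem_inter] at ht
    rcases mem_insert_iff.mp ha with rfl | haM
    · rcases mem_insert_iff.mp hb with rfl | hbM
      · exact absurd rfl hab
      · exact mem_biUnion hbM (mem_biUnion ht.2 ht.1)
    · rcases mem_insert_iff.mp hb with rfl | hbM
      · exact mem_biUnion haM (mem_biUnion ht.1 ht.2)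
      · exact absurd (hMmem a haM b hbM hab) (Finset.nonempty_iff_ne_empty.mp hFab)
  have hsmall : #(M ∪ ⋃ j ∈ M, ⋃ t ∈ (F j : Set T), {i | t ∈ F i} : Set ι) < κ := by
    apply lt_of_le_of_lt (mk_union_le _ _)
    apply Cardinal.add_lt_of_lt hreg.aleph0_le hM
    rw [Cardinal.card_biUnion_lt_iff_forall_of_isRegular hreg hM]
    intro j _
    rw [Cardinal.card_biUnion_lt_iff_forall_of_isRegular hreg
      ((Cardinal.finset_card_lt_aleph0 _).trans_le hreg.aleph0_le)]
    intro t _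
    exact hfib t
  have : κ ≤ #(M ∪ ⋃ j ∈ M, ⋃ t ∈ (F j : Set T), {i | t ∈ F i} : Set ι) := by
    calc κ ≤ #ι := hι
    _ = #(univ : Set ι) := (mk_univ).symm
    _ ≤ _ := mk_le_mk_of_subset hcover
  exact absurd this (not_le.mpr hsmall)

/-- The Δ-system lemma for a regular uncountable cardinal `κ`, for families of finite
sets of size at most `n`. -/
lemma delta_system (hreg : κ.IsRegular) :
    ∀ (n : ℕ) (ι : Type u) (F : ι → Finset T), κ ≤ #ι → (∀ i, (F i).card ≤ n) →
    ∃ S : Set ι, #S = κ ∧ ∃ R : Finset T, ∀ i ∈ S, ∀ j ∈ S, i ≠ j → F i ∩ F j = R := by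
  intro n
  induction n with
  | zero =>
    intro ι F hι hcard
    obtain ⟨S, hS⟩ := Cardinal.le_mk_iff_exists_set.mp hι
    refine ⟨S, hS, ∅, fun i _ j _ _ => ?_⟩
    have hFi : F i = ∅ := Finset.card_eq_zero.mp (Nat.le_zero.mp (hcard i))
    simp [hFi]
  | succ n ih =>
    intro ι F hι hcard
    by_cases hcase : ∃ t, κ ≤ #{i | t ∈ F i}
    · obtain ⟨t, ht⟩ := hcase
      set A := {i | t ∈ F i} with hA
      let F' : A → Finset T := fun i => (F i.1).erase t
      have hAκ : κ ≤ #A := by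
        refine le_trans ht ?_
        exact le_of_eq rfl
      have hcard' : ∀ i : A, (F' i).card ≤ n := by
        rintro ⟨i, hi⟩
        have h1 : ((F i).erase t).card = (F i).card - 1 := Finset.card_erase_of_mem hi
        have := hcard i
        simp only [F', h1]
        omega
      obtain ⟨S', hS', R', hR'⟩ := ih A F' hAκ hcard'
      refine ⟨Subtype.val '' S', ?_, insert t R', ?_⟩
      · rw [mk_image_eq_of_injOn _ _ Subtype.val_injective.injOn]; exact hS'
      rintro _ ⟨i, hiS, rfl⟩ _ ⟨j, hjS, rfl⟩ hij
      have hij' : i ≠ j := fun e => hij (congrArg Subtype.val e)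
      have hroot := hR' i hiS j hjS hij'
      have hti : t ∈ F i.1 := i.2
      have htj : t ∈ F j.1 := j.2
      ext s
      constructor
      · intro hs
        rw [Finset.mem_inter] at hs
        by_cases hst : s = t
        · simp [hst]
        · have : s ∈ F' i ∩ F' j := by
            simp only [F', Finset.mem_inter, Finset.mem_erase]
            exact ⟨⟨hst, hs.1⟩, ⟨hst, hs.2⟩⟩
          rw [hroot] at this
          exact Finset.mem_insert_of_mem this
      · intro hs
        rcases Finset.mem_insert.mp hs with rfl | hsR'
        · exact Finset.mem_inter.mpr ⟨hti, htj⟩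
        · have : s ∈ F' i ∩ F' j := hroot ▸ hsR'
          simp only [F', Finset.mem_inter, Finset.mem_erase] at this
          exact Finset.mem_inter.mpr ⟨this.1.2, this.2.2⟩
    · push_neg at hcase
      obtain ⟨S, hSκ, hdisj⟩ := exists_disjoint_family hreg F hι hcase
      obtain ⟨S', hsub, hS'⟩ := Cardinal.le_mk_iff_exists_subset.mp hSκ
      exact ⟨S', hS', ∅, fun i hi j hj hij => hdisj i (hsub hi) j (hsub hj) hij⟩

omit [DecidableEq T] in
/-- Pigeonhole: some fiber of the cardinality function has size `≥ κ`. -/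
lemma exists_card_fiber (hreg : κ.IsRegular) (hunc : ℵ₀ < κ)
    (F : ι → Finset T) (hι : κ ≤ #ι) :
    ∃ n : ℕ, κ ≤ #{i | (F i).card = n} := by
  by_contra hcon
  push_neg at hcon
  have hcover : (univ : Set ι) = ⋃ n : ULift.{u} ℕ, {i | (F i).card = n.down} := by
    ext i; simp
  have h1 : #ι ≤ Cardinal.sum (fun n : ULift.{u} ℕ => #{i | (F i).card = n.down}) := by
    rw [← mk_univ (α := ι), hcover]
    exact mk_iUnion_le_sum_mk
  have h2 : Cardinal.sum (fun n : ULift.{u} ℕ => #{i | (F i).card = n.down}) < κ := by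
    apply Cardinal.sum_lt_of_isRegular hreg
    · simpa using hunc
    · intro n; exact hcon n.down
  exact absurd (hι.trans h1) (not_le.mpr h2)

end Aux

/-- A cardinal `κ` is a caliber of `X` if every `κ`-indexed family of nonempty open
subsets of `X` admits a `κ`-sized subfamily with nonempty intersection. -/
def IsCaliber (X : Type u) [TopologicalSpace X] (κ : Cardinal.{u}) : Prop :=
  ∀ (ι : Type u) (U : ι → Set X), Cardinal.mk ι = κ →
    (∀ i, IsOpen (U i) ∧ (U i).Nonempty) →
    ∃ B : Set ι, Cardinal.mk B = κ ∧ (⋂ i ∈ B, U i).Nonempty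

section Shrink

variable {ι T : Type u} {κ : Cardinal.{u}} [DecidableEq T] {X : T → Type u} [∀ t, TopologicalSpace (X t)]

/-- Successively shrink a `κ`-sized set of indices to get common points in each of
finitely many coordinates. -/
lemma shrink_finset (h : ∀ t, IsCaliber (X t) κ) (u : ι → ∀ t, Set (X t))
    (hu : ∀ i t, IsOpen (u i t) ∧ (u i t).Nonempty) (R : Finset T) :
    ∀ S : Set ι, #S = κ →
      ∃ S' ⊆ S, #S' = κ ∧ ∀ t ∈ R, ∃ x : X t, ∀ i ∈ S', x ∈ u i t := by
  induction R using Finset.induction with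
  | empty => intro S hS; exact ⟨S, subset_rfl, hS, by simp⟩
  | @insert a R hna ihR =>
    intro S hS
    obtain ⟨S', hsub, hS', hx⟩ := ihR S hS
    obtain ⟨B, hB, x, hxmem⟩ := h a ↥S' (fun i => u i.1 a) hS' (fun i => hu i.1 a)
    have hxB : ∀ i ∈ B, x ∈ u i.1 a := by
      intro i hi
      exact mem_iInter₂.mp hxmem i hi
    refine ⟨Subtype.val '' B, ?_, ?_, ?_⟩
    · exact (image_subset_iff.mpr fun i _ => i.2).trans hsub
    · rw [mk_image_eq_of_injOn _ _ Subtype.val_injective.injOn]; exact hB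
    · intro t ht
      rcases Finset.mem_insert.mp ht with rfl | htR
      · refine ⟨x, ?_⟩
        rintro _ ⟨i, hiB, rfl⟩
        exact hxB i hiB
      · obtain ⟨y, hy⟩ := hx t htR
        refine ⟨y, ?_⟩
        rintro _ ⟨i, _, rfl⟩
        exact hy i.1 i.2

end Shrink

/-- If an uncountable regular cardinal `κ` is a caliber of each factor, then it is a
caliber of the product space. -/
theorem isCaliber_pi {T : Type u} (X : T → Type u) [∀ t, TopologicalSpace (X t)]
    (κ : Cardinal.{u}) (hreg : κ.IsRegular) (hunc : Cardinal.aleph0 < κ)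
    (h : ∀ t, IsCaliber (X t) κ) :
    IsCaliber (∀ t, X t) κ := by
  classical
  haveI : DecidableEq T := Classical.decEq T
  intro ι U hι hU
  -- `ι` is nonempty, hence every `X t` is nonempty
  have hne : Nonempty ι := by
    rw [← Cardinal.mk_ne_zero_iff, hι]
    exact hreg.pos.ne'
  obtain ⟨i0⟩ := hne
  obtain ⟨f0, _⟩ := (hU i0).2
  have hXne : ∀ t, Nonempty (X t) := fun t => ⟨f0 t⟩
  -- choose basic open boxes inside each `U i`
  have hbox : ∀ i, ∃ (f : ∀ t, X t) (I : Finset T) (v : ∀ t, Set (X t)),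
      (∀ t ∈ I, IsOpen (v t) ∧ f t ∈ v t) ∧ (↑I : Set T).pi v ⊆ U i := by
    intro i
    obtain ⟨f, hf⟩ := (hU i).2
    obtain ⟨I, v, hv⟩ := isOpen_pi_iff.mp (hU i).1 f hf
    exact ⟨f, I, v, hv.1, hv.2⟩
  choose f F v hv hsub using hbox
  -- normalize the boxes to be open and nonempty in every coordinate
  set u : ι → ∀ t, Set (X t) := fun i t => if t ∈ F i then v i t else univ with hu_def
  have hu : ∀ i t, IsOpen (u i t) ∧ (u i t).Nonempty := by
    intro i t
    by_cases ht : t ∈ F i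
    · simp only [u]; rw [if_pos ht]
      exact ⟨(hv i t ht).1, ⟨f i t, (hv i t ht).2⟩⟩
    · simp only [u]; rw [if_neg ht]
      exact ⟨isOpen_univ, univ_nonempty⟩
  have hfu : ∀ i, ∀ t ∈ F i, f i t ∈ u i t := by
    intro i t ht
    simp only [u]; rw [if_pos ht]
    exact (hv i t ht).2
  have hsub' : ∀ i, ∀ g : ∀ t, X t, (∀ t ∈ F i, g t ∈ u i t) → g ∈ U i := by
    intro i g hg
    apply hsub i
    intro t ht
    rw [Finset.mem_coe] at ht
    have h2 := hg t ht
    simp only [u] at h2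
    rwa [if_pos ht] at h2
  -- pass to a fiber where the supports have constant cardinality
  obtain ⟨n, hn⟩ := exists_card_fiber hreg hunc F (le_of_eq hι.symm)
  set A := {i | (F i).card = n} with hA
  -- Δ-system lemma
  obtain ⟨S, hSκ, R, hR⟩ := delta_system hreg n ↥A (fun i => F i.1) hn
    (fun i => le_of_eq i.2)
  -- flatten to a subset of `ι`
  set S₀ : Set ι := Subtype.val '' S with hS₀def
  have hS₀κ : #S₀ = κ := by
    rw [hS₀def, mk_image_eq_of_injOn _ _ Subtype.val_injective.injOn]; exact hSκ
  have hR₀ : ∀ i ∈ S₀, ∀ j ∈ S₀, i ≠ j → F i ∩ F j = R := by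
    rintro _ ⟨i, hiS, rfl⟩ _ ⟨j, hjS, rfl⟩ hij
    exact hR i hiS j hjS (fun e => hij (congrArg Subtype.val e))
  -- shrink to get common points on the root coordinates
  obtain ⟨S', hsub2, hS', hx⟩ := shrink_finset h u hu R S₀ hS₀κ
  choose x hxR using hx
  -- define the witness point
  let g : ∀ t, X t := fun t =>
    if htR : t ∈ R then x t htR
    else if hE : ∃ i ∈ S', t ∈ F i then f hE.choose t
    else Classical.arbitrary (X t)
  refine ⟨S', hS', g, ?_⟩
  rw [mem_iInter₂]
  intro i hiS'
  apply hsub' i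
  intro t ht
  by_cases htR : t ∈ R
  · simp only [g, dif_pos htR]
    exact hxR t htR i hiS'
  · have hE : ∃ j ∈ S', t ∈ F j := ⟨i, hiS', ht⟩
    simp only [g, dif_neg htR, dif_pos hE]
    obtain ⟨hjS', htj⟩ := hE.choose_spec
    by_cases hji : hE.choose = i
    · rw [hji]; exact hfu i t ht
    · exfalso
      have := hR₀ hE.choose (hsub2 hjS') i (hsub2 hiS') hji
      apply htR
      rw [← this]
      exact Finset.mem_inter.mpr ⟨htj, ht⟩
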